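/- Let M be a finite-dimensional symplectic vector space, V an isotropic subspace, C a coisotropic subspace with M = V ⊕ C, and W = C ∩ V^⊥. Then C = C^⊥ ⊕ W and C^⊥ = C ∩ W^⊥. -/

import Mathlib

/-- The perpendicular subspace `U^⊥ = {m | ω(m,u) = 0 for all u ∈ U}` with respect to a
bilinear form `ω`. -/
def symplecticPerp {K M : Type*} [Field K] [AddCommGroup M] [Module K M]
    (ω : M →ₗ[K] M →ₗ[K] K) (U : Submodule K M) : Submodule K M where
  carrier := {m : M | ∀ u ∈ U, ω m u = 0}
  add_mem' := by
    intro a b ha hb u hu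
    simp [map_add, ha u hu, hb u hu]
  zero_mem' := by
    intro u hu
    simp
  smul_mem' := by
    intro c a ha u hu
    simp [map_smul, ha u hu]

/-- If `M = V ⊕ C` with `V` isotropic and `C` coisotropic, and `W = C ∩ V^⊥`, then
`C = C^⊥ ⊕ W` and `C^⊥ = C ∩ W^⊥`. -/
theorem stmt_9 (K : Type*) [Field K]
    (M : Type*) [AddCommGroup M] [Module K M] [FiniteDimensional K M]
    (ω : M →ₗ[K] M →ₗ[K] K)
    (halt : ∀ x : M, ω x x = 0)
    (hnd : ∀ x : M, (∀ y : M, ω x y = 0) → x = 0)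
    (V C : Submodule K M)
    (hcompl : IsCompl V C)
    (hViso : V ≤ symplecticPerp ω V)
    (hCcoiso : symplecticPerp ω C ≤ C) :
    symplecticPerp ω C ⊔ (C ⊓ symplecticPerp ω V) = C ∧
      symplecticPerp ω C ⊓ (C ⊓ symplecticPerp ω V) = ⊥ ∧
      symplecticPerp ω C = C ⊓ symplecticPerp ω (C ⊓ symplecticPerp ω V) := by

  classical
  have hnd' : LinearMap.BilinForm.Nondegenerate ω :=
    ⟨fun x hx => hnd x hx, fun y hy => hnd y fun x => LinearMap.IsAlt.isRefl halt x y (hy x)⟩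
  have hrefl : ω.IsRefl := LinearMap.IsAlt.isRefl halt
  have hmem : ∀ (U : Submodule K M) (m : M), m ∈ symplecticPerp ω U ↔ ∀ u ∈ U, ω m u = 0 :=
    fun U m => Iff.rfl
  have hskew : ∀ x y : M, ω x y = -ω y x := fun x y => (LinearMap.IsAlt.neg halt y x).symm
  -- symplecticPerp equals mathlib's orthogonal
  have hperp : ∀ U : Submodule K M, symplecticPerp ω U = LinearMap.BilinForm.orthogonal ω U := by
    intro U
    ext m
    rw [hmem, LinearMap.BilinForm.mem_orthogonal_iff]
    constructor
    · intro h u hu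
      exact hrefl m u (h u hu)
    · intro h u hu
      exact hrefl u m (h u hu)
  -- key: M = V^⊥ ⊔ C^⊥
  have hinf : symplecticPerp ω V ⊓ symplecticPerp ω C = ⊥ := by
    rw [Submodule.eq_bot_iff]
    intro x hx
    refine hnd x fun y => ?_
    obtain ⟨v, c, hv, hc, rfl⟩ := Submodule.codisjoint_iff_exists_add_eq.mp hcompl.codisjoint y
    rw [map_add, hx.1 v hv, hx.2 c hc, add_zero]
  have hsup_top : symplecticPerp ω V ⊔ symplecticPerp ω C = ⊤ := by
    apply Submodule.eq_top_of_finrank_eq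
    have h1 : Module.finrank K (symplecticPerp ω V ⊔ symplecticPerp ω C : Submodule K M)
        + Module.finrank K (symplecticPerp ω V ⊓ symplecticPerp ω C : Submodule K M)
        = Module.finrank K (symplecticPerp ω V) + Module.finrank K (symplecticPerp ω C) :=
      Submodule.finrank_sup_add_finrank_inf_eq _ _
    rw [hinf, finrank_bot, add_zero] at h1
    have hV : Module.finrank K (symplecticPerp ω V) = Module.finrank K M - Module.finrank K V := by
      rw [hperp]; exact LinearMap.BilinForm.finrank_orthogonal hnd' V
    have hC : Module.finrank K (symplecticPerp ω C) = Module.finrank K M - Module.finrank K C := by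
      rw [hperp]; exact LinearMap.BilinForm.finrank_orthogonal hnd' C
    have hVC : Module.finrank K V + Module.finrank K C = Module.finrank K M :=
      Submodule.finrank_add_eq_of_isCompl hcompl
    have hVle : Module.finrank K V ≤ Module.finrank K M := Submodule.finrank_le V
    have hCle : Module.finrank K C ≤ Module.finrank K M := Submodule.finrank_le C
    omega
  -- Goal 1
  have hgoal1 : symplecticPerp ω C ⊔ (C ⊓ symplecticPerp ω V) = C := by
    apply le_antisymm
    · exact sup_le hCcoiso inf_le_left
    · intro c hc
      have : c ∈ symplecticPerp ω V ⊔ symplecticPerp ω C := hsup_top ▸ Submodule.mem_top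
      obtain ⟨a, ha, b, hb, rfl⟩ := Submodule.mem_sup.mp this
      have hbC : b ∈ C := hCcoiso hb
      have haC : a ∈ C := by
        have : a = a + b - b := by abel
        rw [this]
        exact Submodule.sub_mem _ hc hbC
      exact Submodule.add_mem _ (Submodule.mem_sup_right ⟨haC, ha⟩) (Submodule.mem_sup_left hb)
  refine ⟨hgoal1, ?_, ?_⟩
  · -- Goal 2
    rw [Submodule.eq_bot_iff]
    intro x ⟨hx1, _, hx2⟩
    have : x ∈ symplecticPerp ω V ⊓ symplecticPerp ω C := ⟨hx2, hx1⟩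
    rw [hinf] at this
    exact this
  · -- Goal 3
    apply le_antisymm
    · intro x hx
      refine ⟨hCcoiso hx, fun w hw => hx w hw.1⟩
    · rintro x ⟨hxC, hxW⟩
      intro c hc
      have : c ∈ symplecticPerp ω C ⊔ (C ⊓ symplecticPerp ω V) := hgoal1.ge hc
      obtain ⟨b, hb, w, hw, rfl⟩ := Submodule.mem_sup.mp this
      have h1 : ω x b = 0 := hrefl b x (hb x hxC)
      have h2 : ω x w = 0 := hxW w hw
      rw [map_add, h1, h2, add_zero]
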